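/- Suppose 𝒳 is a finite alphabet. Fix m ≥ 1 and consider mn mutually independent samples collected over m time steps, where at each time step n_k samples are drawn from p_{0,k} for each k = 1,…,K (n_1+⋯+n_K = n); let Π denote the empirical distribution of all mn samples. Then for every set A ⊆ 𝒫_𝒳, the probability that Π ∈ A is at most (∏_{k=1}^K |𝒫_{m n_k}|) · exp( − inf{ Σ_{k=1}^K m n_k D(U_k‖p_{0,k}) : (U_1,…,U_K) ∈ 𝒫_{m n_1}×⋯×𝒫_{m n_K}, Σ_k (n_k/n) U_k ∈ A } ). -/

import Mathlib

open scoped ENNReal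

/-- Kullback–Leibler divergence `D(U‖P)` between two probability vectors on a finite
alphabet, with value `∞` when `U` is not absolutely continuous with respect to `P`. -/
noncomputable def klD {𝒳 : Type*} [Fintype 𝒳] (U P : 𝒳 → ℝ) : ℝ≥0∞ := by
  classical
  exact if (∀ x, P x = 0 → U x = 0)
    then ENNReal.ofReal (∑ x, U x * Real.log (U x / P x)) else ⊤

/-- The set `𝒫_m` of types (empirical distributions) on `𝒳` with denominator `m`. -/
def typeSet (𝒳 : Type*) [Fintype 𝒳] (m : ℕ) : Set (𝒳 → ℝ) :=
  {q | ∃ c : 𝒳 → ℕ, (∀ x, q x = (c x : ℝ) / m) ∧ ∑ x, c x = m}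


/-- Gibbs' inequality. -/
lemma aux_gibbs {𝒳 : Type*} [Fintype 𝒳] (U P : 𝒳 → ℝ) (hU : ∀ x, 0 ≤ U x)
    (hP : ∀ x, 0 ≤ P x) (hUs : ∑ x, U x = 1) (hPs : ∑ x, P x = 1)
    (hac : ∀ x, P x = 0 → U x = 0) :
    0 ≤ ∑ x, U x * Real.log (U x / P x) := by
  classical
  set s : Finset 𝒳 := Finset.univ.filter (fun x => U x ≠ 0) with hs
  have hsum : ∑ x, U x * Real.log (U x / P x) = ∑ x ∈ s, U x * Real.log (U x / P x) := by
    rw [Finset.sum_filter]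
    apply Finset.sum_congr rfl
    intro x _
    by_cases h : U x = 0 <;> simp [h]
  have hUpos : ∀ x ∈ s, 0 < U x := by
    intro x hx
    rcases (hU x).lt_or_eq with h | h
    · exact h
    · exact absurd h.symm (Finset.mem_filter.mp hx).2
  have hPpos : ∀ x ∈ s, 0 < P x := by
    intro x hx
    rcases (hP x).lt_or_eq with h | h
    · exact h
    · exact absurd (hac x h.symm) (Finset.mem_filter.mp hx).2
  have key : ∀ x ∈ s, U x - P x ≤ U x * Real.log (U x / P x) := by
    intro x hx
    have hU' := hUpos x hx
    have hP' := hPpos x hx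
    have hlog : Real.log (P x / U x) ≤ P x / U x - 1 :=
      Real.log_le_sub_one_of_pos (div_pos hP' hU')
    have hlog' : 1 - P x / U x ≤ Real.log (U x / P x) := by
      rw [Real.log_div hU'.ne' hP'.ne']
      rw [Real.log_div hP'.ne' hU'.ne'] at hlog
      linarith
    have := mul_le_mul_of_nonneg_left hlog' hU'.le
    calc U x - P x = U x * (1 - P x / U x) := by field_simp
      _ ≤ U x * Real.log (U x / P x) := this
  have hsU : ∑ x ∈ s, U x = 1 := by
    rw [← hUs]
    apply Finset.sum_subset (Finset.subset_univ s)
    intro x _ hx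
    by_contra h
    exact hx (Finset.mem_filter.mpr ⟨Finset.mem_univ x, h⟩)
  have hsP : ∑ x ∈ s, P x ≤ 1 := by
    rw [← hPs]
    exact Finset.sum_le_sum_of_subset_of_nonneg (Finset.subset_univ s)
      (fun x _ _ => hP x)
  calc (0:ℝ) ≤ ∑ x ∈ s, U x - ∑ x ∈ s, P x := by linarith
    _ = ∑ x ∈ s, (U x - P x) := (Finset.sum_sub_distrib _ _).symm
    _ ≤ ∑ x ∈ s, U x * Real.log (U x / P x) := Finset.sum_le_sum key
    _ = ∑ x, U x * Real.log (U x / P x) := hsum.symm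

/-- Regrouping a product over sample positions by (group, value). -/
lemma aux_regroup {𝒳 : Type*} [Fintype 𝒳] [DecidableEq 𝒳] {m n K : ℕ}
    (σ : Fin m → Fin n → Fin K) (w : Fin m → Fin n → 𝒳) (f : Fin K → 𝒳 → ℝ) :
    ∏ t, ∏ i, f (σ t i) (w t i) =
      ∏ k, ∏ x, f k x ^ ((Finset.univ.filter
        (fun q : Fin m × Fin n => σ q.1 q.2 = k ∧ w q.1 q.2 = x)).card) := by
  classical
  have h1 : ∏ t, ∏ i, f (σ t i) (w t i)
      = ∏ q : Fin m × Fin n, f (σ q.1 q.2) (w q.1 q.2) := by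
    rw [Fintype.prod_prod_type]
  rw [h1]
  rw [← Finset.prod_fiberwise_of_maps_to
    (g := fun q : Fin m × Fin n => ((σ q.1 q.2, w q.1 q.2) : Fin K × 𝒳))
    (fun q _ => Finset.mem_univ _) (fun q => f (σ q.1 q.2) (w q.1 q.2))]
  rw [Fintype.prod_prod_type]
  apply Finset.prod_congr rfl; intro k _
  apply Finset.prod_congr rfl; intro x _
  have : (Finset.univ.filter
      (fun q : Fin m × Fin n => ((σ q.1 q.2, w q.1 q.2) : Fin K × 𝒳) = (k, x)))
      = Finset.univ.filter (fun q : Fin m × Fin n => σ q.1 q.2 = k ∧ w q.1 q.2 = x) := by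
    apply Finset.filter_congr
    intro q _
    simp [Prod.ext_iff]
  rw [this]
  calc ∏ q ∈ Finset.univ.filter
        (fun q : Fin m × Fin n => σ q.1 q.2 = k ∧ w q.1 q.2 = x), f (σ q.1 q.2) (w q.1 q.2)
      = ∏ _q ∈ Finset.univ.filter
        (fun q : Fin m × Fin n => σ q.1 q.2 = k ∧ w q.1 q.2 = x), f k x :=
        Finset.prod_congr rfl (fun q hq => by
          obtain ⟨h1, h2⟩ := (Finset.mem_filter.mp hq).2
          rw [h1, h2])
    _ = f k x ^ (Finset.univ.filter
        (fun q : Fin m × Fin n => σ q.1 q.2 = k ∧ w q.1 q.2 = x)).card :=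
        Finset.prod_const _

/-- Sum over all sample arrays of a product factorizes. -/
lemma aux_sum_prod {𝒳 : Type*} [Fintype 𝒳] {m n : ℕ} (g : Fin m → Fin n → 𝒳 → ℝ) :
    ∑ w : Fin m → Fin n → 𝒳, ∏ t, ∏ i, g t i (w t i) = ∏ t, ∏ i, ∑ x, g t i x := by
  classical
  have huniv : (Finset.univ : Finset (Fin m → Fin n → 𝒳)) =
      Fintype.piFinset (fun _ : Fin m =>
        Fintype.piFinset (fun _ : Fin n => (Finset.univ : Finset 𝒳))) := by
    simp [Fintype.piFinset_univ]
  rw [huniv,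
    Finset.sum_prod_piFinset (Fintype.piFinset fun _ : Fin n => (Finset.univ : Finset 𝒳))
      (fun t h => ∏ i, g t i (h i))]
  exact Finset.prod_congr rfl fun t _ => Finset.sum_prod_piFinset _ _

/-- Cardinality of the type class set. -/
lemma aux_card_typeSet {𝒳 : Type*} [Fintype 𝒳] [DecidableEq 𝒳] (N : ℕ) :
    Nat.card (typeSet 𝒳 N) = (Finset.piAntidiag (Finset.univ : Finset 𝒳) N).card := by
  classical
  have hset : typeSet 𝒳 N = ↑((Finset.piAntidiag (Finset.univ : Finset 𝒳) N).image
      (fun c x => (c x : ℝ) / N)) := by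
    ext q
    simp only [typeSet, Set.mem_setOf_eq, Finset.coe_image, Set.mem_image,
      Finset.mem_coe, Finset.mem_piAntidiag]
    constructor
    · rintro ⟨c, hq, hc⟩
      exact ⟨c, ⟨hc, fun i _ => Finset.mem_univ i⟩, (funext fun x => (hq x).symm)⟩
    · rintro ⟨c, ⟨hc, -⟩, rfl⟩
      exact ⟨c, fun x => rfl, hc⟩
  rw [hset, Nat.card_coe_set_eq, Set.ncard_coe_finset]
  apply Finset.card_image_of_injOn
  intro c hc c' hc' hcc
  rcases Nat.eq_zero_or_pos N with hN | hN
  · subst hN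
    have h0 : ∀ c'' : 𝒳 → ℕ, c'' ∈ Finset.piAntidiag (Finset.univ : Finset 𝒳) 0 →
        c'' = 0 := by
      intro c'' hc''
      have := (Finset.mem_piAntidiag.mp hc'').1
      funext x
      exact (Finset.sum_eq_zero_iff.mp this) x (Finset.mem_univ x)
    rw [h0 c hc, h0 c' hc']
  · funext x
    have := congrFun hcc x
    have hN' : (N : ℝ) ≠ 0 := Nat.cast_ne_zero.mpr hN.ne'
    field_simp at this
    exact_mod_cast this

open Classical in
/-- Sanov-type bound: `mn` mutually independent samples are collected over
`m` time steps, at each time step `n_k` of them drawn from `p0 k` (encoded by per-time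
labelings `σ t` with exactly `n_k` indices in group `k`); `Π` is the empirical distribution
of all `mn` samples.  For every `A ⊆ 𝒫_𝒳`,
`ℙ(Π ∈ A) ≤ (∏_k |𝒫_{m n_k}|) · exp(−inf{ ∑_k m n_k D(U_k‖p0_k) :
   U_k ∈ 𝒫_{m n_k}, ∑_k (n_k/n) U_k ∈ A })`,
where a type `U_k ∈ 𝒫_{m n_k}` is encoded by its counts `d k : 𝒳 → ℕ`, `U_k = d k/(m n_k)`. -/
theorem stmt_13 {𝒳 : Type*} [Fintype 𝒳] [DecidableEq 𝒳]
    (m n K : ℕ) (hm : 1 ≤ m) (nk : Fin K → ℕ) (hn : ∑ k, nk k = n)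
    (p0 : Fin K → 𝒳 → ℝ)
    (hp0 : ∀ k, (∀ x, 0 ≤ p0 k x) ∧ ∑ x, p0 k x = 1)
    (σ : Fin m → Fin n → Fin K)
    (hσ : ∀ t k, (Finset.univ.filter (fun i => σ t i = k)).card = nk k)
    (A : Set (𝒳 → ℝ))
    (I : ℝ≥0∞)
    (hI : I = ⨅ (d : Fin K → 𝒳 → ℕ)
        (_ : (∀ k, ∑ x, d k x = m * nk k)
          ∧ (fun x => ∑ k, ((nk k : ℝ) / n) * ((d k x : ℝ) / (m * nk k))) ∈ A),
      ∑ k, ((m * nk k : ℕ) : ℝ≥0∞) * klD (fun x => (d k x : ℝ) / (m * nk k)) (p0 k)) :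
    ENNReal.ofReal
      (∑ w ∈ Finset.univ.filter (fun w : Fin m → Fin n → 𝒳 =>
          (fun x => (((Finset.univ.filter
              (fun q : Fin m × Fin n => w q.1 q.2 = x)).card : ℝ) / (m * n)) : 𝒳 → ℝ) ∈ A),
        ∏ t, ∏ i, p0 (σ t i) (w t i))
    ≤ (∏ k, (Nat.card (typeSet 𝒳 (m * nk k)) : ℝ≥0∞)) * EReal.exp (-(I : EReal)) := by
  classical
  have hp0nn : ∀ k x, 0 ≤ p0 k x := fun k x => (hp0 k).1 x
  set cnt : (Fin m → Fin n → 𝒳) → Fin K → 𝒳 → ℕ := fun w k x =>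
    (Finset.univ.filter (fun q : Fin m × Fin n => σ q.1 q.2 = k ∧ w q.1 q.2 = x)).card
    with hcntdef
  set P : (Fin m → Fin n → 𝒳) → ℝ := fun w => ∏ t, ∏ i, p0 (σ t i) (w t i) with hPdef
  have hPnn : ∀ w, 0 ≤ P w := fun w =>
    Finset.prod_nonneg fun t _ => Finset.prod_nonneg fun i _ => hp0nn _ _
  -- group counts sum to m * nk k
  have hcnt_sum : ∀ (w : Fin m → Fin n → 𝒳) (k : Fin K), ∑ x, cnt w k x = m * nk k := by
    intro w k
    have h1 : (Finset.univ.filter (fun q : Fin m × Fin n => σ q.1 q.2 = k)).card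
        = ∑ x, cnt w k x := by
      rw [Finset.card_eq_sum_card_fiberwise
        (f := fun q : Fin m × Fin n => w q.1 q.2) (t := Finset.univ)
        (fun q _ => Finset.mem_univ _)]
      refine Finset.sum_congr rfl fun x _ => ?_
      rw [hcntdef, Finset.filter_filter]
    have h2 : (Finset.univ.filter (fun q : Fin m × Fin n => σ q.1 q.2 = k)).card
        = m * nk k := by
      rw [Finset.card_filter, Fintype.sum_prod_type]
      have h3 : ∀ t : Fin m, (∑ i, if σ t i = k then 1 else 0) = nk k := by
        intro t; rw [← Finset.card_filter]; exact hσ t k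
      simp only [h3, Finset.sum_const, Finset.card_univ, Fintype.card_fin, smul_eq_mul]
    omega
  -- small count lemma: cnt w k x = 0 when nk k = 0, and generally cnt ≤ m * nk k
  have hcnt_le : ∀ w k x, cnt w k x ≤ m * nk k := by
    intro w k x
    rw [← hcnt_sum w k]
    exact Finset.single_le_sum (f := fun x => cnt w k x) (fun _ _ => Nat.zero_le _)
      (Finset.mem_univ x)
  -- membership transfer
  have hmem : ∀ w : Fin m → Fin n → 𝒳,
      (fun x => (((Finset.univ.filter
          (fun q : Fin m × Fin n => w q.1 q.2 = x)).card : ℝ) / (m * n)) : 𝒳 → ℝ)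
      = (fun x => ∑ k, ((nk k : ℝ) / n) * ((cnt w k x : ℝ) / (m * nk k))) := by
    intro w
    funext x
    have htot : (Finset.univ.filter (fun q : Fin m × Fin n => w q.1 q.2 = x)).card
        = ∑ k, cnt w k x := by
      rw [Finset.card_eq_sum_card_fiberwise
        (f := fun q : Fin m × Fin n => σ q.1 q.2) (t := Finset.univ)
        (fun q _ => Finset.mem_univ _)]
      refine Finset.sum_congr rfl fun k _ => ?_
      rw [hcntdef, Finset.filter_filter]
      congr 1
      ext q
      simp only [Finset.mem_filter]
      tauto
    rw [htot]
    push_cast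
    rw [Finset.sum_div]
    refine Finset.sum_congr rfl fun k _ => ?_
    rcases Nat.eq_zero_or_pos (nk k) with h0 | hpos
    · have hz : cnt w k x = 0 := by
        have h := hcnt_le w k x
        rw [h0, Nat.mul_zero] at h
        omega
      simp [h0, hz]
    · have hn0 : 0 < n := by
        have h := Finset.single_le_sum (f := nk) (fun _ _ => Nat.zero_le _)
          (Finset.mem_univ k)
        omega
      have h1 : (nk k : ℝ) ≠ 0 := Nat.cast_ne_zero.mpr hpos.ne'
      have h2 : (n : ℝ) ≠ 0 := Nat.cast_ne_zero.mpr hn0.ne'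
      have h3 : (m : ℝ) ≠ 0 := Nat.cast_ne_zero.mpr (by omega)
      field_simp
  -- the per-fiber bound
  have fiber_bound : ∀ d : Fin K → 𝒳 → ℕ, (∀ k, ∑ x, d k x = m * nk k) →
      ENNReal.ofReal (∑ w ∈ Finset.univ.filter (fun w => cnt w = d), P w)
        ≤ EReal.exp (-((∑ k, ((m * nk k : ℕ) : ℝ≥0∞) *
            klD (fun x => (d k x : ℝ) / (m * nk k)) (p0 k) : ℝ≥0∞) : EReal)) := by
    intro d hd
    have hd_le : ∀ k x, d k x ≤ m * nk k := by
      intro k x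
      rw [← hd k]
      exact Finset.single_le_sum (f := fun x => d k x) (fun _ _ => Nat.zero_le _)
        (Finset.mem_univ x)
    have regroup : ∀ (f : Fin K → 𝒳 → ℝ) (w : Fin m → Fin n → 𝒳), cnt w = d →
        ∏ t, ∏ i, f (σ t i) (w t i) = ∏ k, ∏ x, f k x ^ d k x := by
      intro f w hw
      rw [aux_regroup σ w f]
      exact Finset.prod_congr rfl fun k _ => Finset.prod_congr rfl fun x _ => by
        rw [show (Finset.univ.filter
          (fun q : Fin m × Fin n => σ q.1 q.2 = k ∧ w q.1 q.2 = x)).card = d k x from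
          congrFun (congrFun hw k) x]
    by_cases hac : ∀ k x, p0 k x = 0 → d k x = 0
    · -- absolutely continuous case
      set U : Fin K → 𝒳 → ℝ := fun k x => (d k x : ℝ) / ((m : ℝ) * (nk k : ℝ)) with hUdef
      have hUnn : ∀ k x, 0 ≤ U k x := fun k x =>
        div_nonneg (Nat.cast_nonneg _) (by positivity)
      have hUzero : ∀ k x, nk k = 0 → U k x = 0 := by
        intro k x h0
        have h : d k x = 0 := by
          have h := hd_le k x
          rw [h0, Nat.mul_zero] at h
          omega
        simp [hUdef, h]
      have hUsum : ∀ k, 0 < nk k → ∑ x, U k x = 1 := by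
        intro k hk
        have hmn : ((m : ℝ) * (nk k : ℝ)) ≠ 0 := by
          have h1 : (nk k : ℝ) ≠ 0 := Nat.cast_ne_zero.mpr hk.ne'
          have h3 : (m : ℝ) ≠ 0 := Nat.cast_ne_zero.mpr (by omega)
          exact mul_ne_zero h3 h1
        rw [hUdef, ← Finset.sum_div]
        rw [show (∑ x, (d k x : ℝ)) = ((m : ℝ) * (nk k : ℝ)) by
          rw [← Nat.cast_sum, hd k]; push_cast; ring]
        exact div_self hmn
      have hdU : ∀ k x, ((m * nk k : ℕ) : ℝ) * U k x = (d k x : ℝ) := by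
        intro k x
        rcases Nat.eq_zero_or_pos (nk k) with h0 | hpos
        · have h : d k x = 0 := by
            have h := hd_le k x
            rw [h0, Nat.mul_zero] at h
            omega
          simp [hUzero k x h0, h]
        · have h1 : (nk k : ℝ) ≠ 0 := Nat.cast_ne_zero.mpr hpos.ne'
          have h3 : (m : ℝ) ≠ 0 := Nat.cast_ne_zero.mpr (by omega)
          rw [hUdef]
          push_cast
          field_simp
      have hUac : ∀ k x, p0 k x = 0 → U k x = 0 := by
        intro k x h
        simp [hUdef, hac k x h]
      set S : Fin K → ℝ := fun k => ∑ x, U k x * Real.log (U k x / p0 k x) with hSdef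
      have hSnn : ∀ k, 0 ≤ S k := by
        intro k
        rcases Nat.eq_zero_or_pos (nk k) with h0 | hpos
        · rw [hSdef]
          simp only
          rw [Finset.sum_eq_zero fun x _ => by rw [hUzero k x h0, zero_mul]]
        · exact aux_gibbs (U k) (p0 k) (hUnn k) (hp0 k).1 (hUsum k hpos) (hp0 k).2
            (hUac k)
      have hUpos : ∀ k x, 0 < d k x → 0 < U k x := by
        intro k x hdx
        have hpos : 0 < nk k := by
          rcases Nat.eq_zero_or_pos (nk k) with h0 | h
          · exfalso
            have h := hd_le k x
            rw [h0, Nat.mul_zero] at h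
            omega
          · exact h
        rw [hUdef]
        have h1 : (0:ℝ) < (m : ℝ) * (nk k : ℝ) := by positivity
        positivity
      -- the real-valued bound
      have key : ∑ w ∈ Finset.univ.filter (fun w => cnt w = d), P w
          ≤ Real.exp (-(∑ k, ((m * nk k : ℕ) : ℝ) * S k)) := by
        have hterm : ∀ k x, p0 k x ^ d k x
            = Real.exp (-((d k x : ℝ) * Real.log (U k x / p0 k x))) * U k x ^ d k x := by
          intro k x
          rcases Nat.eq_zero_or_pos (d k x) with h0 | hdx
          · simp [h0]
          · have hU' : 0 < U k x := hUpos k x hdx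
            have hp' : 0 < p0 k x := by
              rcases (hp0nn k x).lt_or_eq with h | h
              · exact h
              · exact absurd (hac k x h.symm) hdx.ne'
            have hlog : -Real.log (U k x / p0 k x) = Real.log (p0 k x / U k x) := by
              rw [Real.log_div hU'.ne' hp'.ne', Real.log_div hp'.ne' hU'.ne']
              ring
            rw [show -((d k x : ℝ) * Real.log (U k x / p0 k x))
                = (d k x : ℝ) * (-Real.log (U k x / p0 k x)) by ring]
            rw [hlog, Real.exp_nat_mul, Real.exp_log (div_pos hp' hU')]
            rw [← mul_pow, div_mul_cancel₀ _ hU'.ne']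
        have hexp : Real.exp (-(∑ k, ((m * nk k : ℕ) : ℝ) * S k))
            = ∏ k, ∏ x, Real.exp (-((d k x : ℝ) * Real.log (U k x / p0 k x))) := by
          rw [show -(∑ k, ((m * nk k : ℕ) : ℝ) * S k)
              = ∑ k, ∑ x, -((d k x : ℝ) * Real.log (U k x / p0 k x)) by
            rw [← Finset.sum_neg_distrib]
            refine Finset.sum_congr rfl fun k _ => ?_
            rw [hSdef]
            simp only
            rw [Finset.mul_sum, ← Finset.sum_neg_distrib]
            refine Finset.sum_congr rfl fun x _ => ?_
            rw [← mul_assoc, hdU k x]]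
          rw [Real.exp_sum]
          exact Finset.prod_congr rfl fun k _ => Real.exp_sum _ _
        have hptw : ∀ w ∈ Finset.univ.filter (fun w => cnt w = d),
            P w = Real.exp (-(∑ k, ((m * nk k : ℕ) : ℝ) * S k))
              * ∏ t, ∏ i, U (σ t i) (w t i) := by
          intro w hw
          have hw' : cnt w = d := (Finset.mem_filter.mp hw).2
          rw [hPdef]
          simp only
          rw [regroup p0 w hw', regroup U w hw', hexp, ← Finset.prod_mul_distrib]
          refine Finset.prod_congr rfl fun k _ => ?_
          rw [← Finset.prod_mul_distrib]
          exact Finset.prod_congr rfl fun x _ => hterm k x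
        rw [Finset.sum_congr rfl hptw, ← Finset.mul_sum]
        have hle1 : ∑ w ∈ Finset.univ.filter (fun w => cnt w = d),
            ∏ t, ∏ i, U (σ t i) (w t i) ≤ 1 := by
          calc ∑ w ∈ Finset.univ.filter (fun w => cnt w = d),
                ∏ t, ∏ i, U (σ t i) (w t i)
              ≤ ∑ w : Fin m → Fin n → 𝒳, ∏ t, ∏ i, U (σ t i) (w t i) :=
                Finset.sum_le_sum_of_subset_of_nonneg (Finset.filter_subset _ _)
                  (fun w _ _ => Finset.prod_nonneg fun t _ =>
                    Finset.prod_nonneg fun i _ => hUnn _ _)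
            _ = ∏ t, ∏ i, ∑ x, U (σ t i) x := aux_sum_prod _
            _ = 1 := Finset.prod_eq_one fun t _ => Finset.prod_eq_one fun i _ => by
                apply hUsum
                have hi : i ∈ Finset.univ.filter (fun i' => σ t i' = σ t i) :=
                  Finset.mem_filter.mpr ⟨Finset.mem_univ i, rfl⟩
                have := hσ t (σ t i)
                have hc : 0 < (Finset.univ.filter (fun i' => σ t i' = σ t i)).card :=
                  Finset.card_pos.mpr ⟨i, hi⟩
                omega
        calc Real.exp (-(∑ k, ((m * nk k : ℕ) : ℝ) * S k))
              * ∑ w ∈ Finset.univ.filter (fun w => cnt w = d),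
                ∏ t, ∏ i, U (σ t i) (w t i)
            ≤ Real.exp (-(∑ k, ((m * nk k : ℕ) : ℝ) * S k)) * 1 :=
              mul_le_mul_of_nonneg_left hle1 (Real.exp_pos _).le
          _ = _ := mul_one _
      -- identify the ENNReal exponent
      have hkl : ∀ k, klD (fun x => (d k x : ℝ) / (m * nk k)) (p0 k)
          = ENNReal.ofReal (S k) := by
        intro k
        unfold klD
        rw [if_pos (fun x hx => by simpa [hUdef] using hUac k x hx)]
      have hJ : (∑ k, ((m * nk k : ℕ) : ℝ≥0∞) *
            klD (fun x => (d k x : ℝ) / (m * nk k)) (p0 k))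
          = ENNReal.ofReal (∑ k, ((m * nk k : ℕ) : ℝ) * S k) := by
        rw [ENNReal.ofReal_sum_of_nonneg
          (fun k _ => mul_nonneg (Nat.cast_nonneg _) (hSnn k))]
        refine Finset.sum_congr rfl fun k _ => ?_
        rw [hkl k, ENNReal.ofReal_mul (Nat.cast_nonneg _), ENNReal.ofReal_natCast]
      rw [hJ]
      have hR : 0 ≤ ∑ k, ((m * nk k : ℕ) : ℝ) * S k :=
        Finset.sum_nonneg fun k _ => mul_nonneg (Nat.cast_nonneg _) (hSnn k)
      rw [show (-((ENNReal.ofReal (∑ k, ((m * nk k : ℕ) : ℝ) * S k) : ℝ≥0∞) : EReal))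
          = ((-(∑ k, ((m * nk k : ℕ) : ℝ) * S k) : ℝ) : EReal) by
        rw [EReal.coe_ennreal_ofReal, max_eq_left hR, ← EReal.coe_neg]]
      rw [EReal.exp_coe]
      exact ENNReal.ofReal_le_ofReal key
    · -- not absolutely continuous: the fiber sum vanishes
      have hz : ∑ w ∈ Finset.univ.filter (fun w => cnt w = d), P w = 0 := by
        apply Finset.sum_eq_zero
        intro w hw
        have hw' : cnt w = d := (Finset.mem_filter.mp hw).2
        push_neg at hac
        obtain ⟨k, x, hpz, hdz⟩ := hac
        rw [hPdef]
        simp only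
        rw [regroup p0 w hw']
        apply Finset.prod_eq_zero (Finset.mem_univ k)
        apply Finset.prod_eq_zero (Finset.mem_univ x)
        rw [hpz]
        exact zero_pow hdz
      rw [hz]
      simp
  -- main decomposition
  set W : Finset (Fin m → Fin n → 𝒳) := Finset.univ.filter (fun w : Fin m → Fin n → 𝒳 =>
      (fun x => (((Finset.univ.filter
          (fun q : Fin m × Fin n => w q.1 q.2 = x)).card : ℝ) / (m * n)) : 𝒳 → ℝ) ∈ A)
    with hWdef
  have hdecomp : ∑ w ∈ W, P w = ∑ dd ∈ W.image cnt,
      ∑ w ∈ W.filter (fun w => cnt w = dd), P w :=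
    (Finset.sum_fiberwise_of_maps_to (fun w hw => Finset.mem_image_of_mem cnt hw) P).symm
  calc ENNReal.ofReal (∑ w ∈ W, P w)
      = ∑ dd ∈ W.image cnt,
          ENNReal.ofReal (∑ w ∈ W.filter (fun w => cnt w = dd), P w) := by
        rw [hdecomp, ENNReal.ofReal_sum_of_nonneg
          (fun dd _ => Finset.sum_nonneg fun w _ => hPnn w)]
    _ ≤ ∑ _dd ∈ W.image cnt, EReal.exp (-(I : EReal)) := by
        refine Finset.sum_le_sum fun dd hdd => ?_
        obtain ⟨w0, hw0, hw0d⟩ := Finset.mem_image.mp hdd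
        have hdsum : ∀ k, ∑ x, dd k x = m * nk k := by
          intro k; rw [← hw0d]; exact hcnt_sum w0 k
        have hdA : (fun x => ∑ k, ((nk k : ℝ) / n) * ((dd k x : ℝ) / (m * nk k))) ∈ A := by
          have := (Finset.mem_filter.mp hw0).2
          rw [hmem w0] at this
          rwa [hw0d] at this
        have hIle : I ≤ ∑ k, ((m * nk k : ℕ) : ℝ≥0∞) *
            klD (fun x => (dd k x : ℝ) / (m * nk k)) (p0 k) := by
          rw [hI]
          exact iInf₂_le dd ⟨hdsum, hdA⟩
        calc ENNReal.ofReal (∑ w ∈ W.filter (fun w => cnt w = dd), P w)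
            ≤ ENNReal.ofReal (∑ w ∈ Finset.univ.filter (fun w => cnt w = dd), P w) := by
              apply ENNReal.ofReal_le_ofReal
              apply Finset.sum_le_sum_of_subset_of_nonneg
              · intro w hw
                have := Finset.mem_filter.mp hw
                exact Finset.mem_filter.mpr ⟨Finset.mem_univ w, this.2⟩
              · exact fun w _ _ => hPnn w
          _ ≤ EReal.exp (-((∑ k, ((m * nk k : ℕ) : ℝ≥0∞) *
                klD (fun x => (dd k x : ℝ) / (m * nk k)) (p0 k) : ℝ≥0∞) : EReal)) :=
              fiber_bound dd hdsum
          _ ≤ EReal.exp (-(I : EReal)) := by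
              apply EReal.exp_monotone
              rw [EReal.neg_le_neg_iff]
              exact EReal.coe_ennreal_le_coe_ennreal_iff.mpr hIle
    _ = ((W.image cnt).card : ℝ≥0∞) * EReal.exp (-(I : EReal)) := by
        rw [Finset.sum_const, nsmul_eq_mul]
    _ ≤ (∏ k, (Nat.card (typeSet 𝒳 (m * nk k)) : ℝ≥0∞)) * EReal.exp (-(I : EReal)) := by
        apply mul_le_mul_left
        have hsub : W.image cnt ⊆ Fintype.piFinset
            (fun k => Finset.piAntidiag (Finset.univ : Finset 𝒳) (m * nk k)) := by
          intro dd hdd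
          obtain ⟨w0, _, hw0d⟩ := Finset.mem_image.mp hdd
          refine Fintype.mem_piFinset.mpr fun k => Finset.mem_piAntidiag.mpr ?_
          refine ⟨?_, fun x _ => Finset.mem_univ x⟩
          rw [← hw0d]
          exact hcnt_sum w0 k
        have hcard : (W.image cnt).card ≤ ∏ k, (Finset.piAntidiag
            (Finset.univ : Finset 𝒳) (m * nk k)).card := by
          calc (W.image cnt).card ≤ _ := Finset.card_le_card hsub
            _ = _ := Fintype.card_piFinset _
        calc ((W.image cnt).card : ℝ≥0∞)
            ≤ ((∏ k, (Finset.piAntidiag (Finset.univ : Finset 𝒳) (m * nk k)).card : ℕ)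
                : ℝ≥0∞) := Nat.cast_le.mpr hcard
          _ = ∏ k, (Nat.card (typeSet 𝒳 (m * nk k)) : ℝ≥0∞) := by
              rw [Nat.cast_prod]
              exact Finset.prod_congr rfl fun k _ => by rw [aux_card_typeSet]
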